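/- Let α be a partition with multiplicities (a_1, …, a_n) (so a_i parts equal to i) and let X be a type. There is a bijection between the product ∏_{i=1}^n Sym^{a_i}(X) and the set of finitely supported functions g from X to the set of partitions (allowing the empty partition) such that ∑_{x ∈ X} g(x) = α, where the sum of partitions is taken multiplicity-wise (the multiplicity of i in ∑_x g(x) is ∑_x (multiplicity of i in g(x))). -/

import Mathlib

/-- Let `α` be a partition with `a i` parts equal to `i` (for `i = 1, …, n`), encoded as the
finitely supported multiplicity function `∑_{i=1}^n single i (a i) : ℕ →₀ ℕ` (partitions are
identified with finitely supported functions on the positive integers recording multiplicities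
of parts; the empty partition is the zero function).  For any type `X` there is a bijection
between `∏_{i=1}^n Sym^{a_i}(X)` and the finitely supported functions `g` from `X` to
partitions with `∑_{x ∈ X} g x = α`, the sum of partitions being taken multiplicity-wise. -/
theorem stmt4 (n : ℕ) (a : Fin n → ℕ) (X : Type*) [DecidableEq X] :
    Nonempty ((∀ i : Fin n, Sym X (a i)) ≃
      {g : X →₀ (ℕ →₀ ℕ) //
        (g.sum fun _ p => p) = ∑ i : Fin n, Finsupp.single ((i : ℕ) + 1) (a i)}) := by
  classical
  -- Step 1: Sym X k ≃ {f : X →₀ ℕ // f.sum (fun _ m => m) = k}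
  have e1 : ∀ k : ℕ, Sym X k ≃ {f : X →₀ ℕ // (f.sum fun _ m => m) = k} := fun k =>
    (Equiv.subtypeEquiv (Multiset.toFinsupp (α := X)).toEquiv (fun s => by
      simp only [AddEquiv.toEquiv_eq_coe, EquivLike.coe_coe]
      rw [show (fun (_ : X) (m : ℕ) => m) = (fun _ => id) from rfl,
        Multiset.toFinsupp_sum_eq])).trans (Equiv.refl _)
  have e2 : (∀ i : Fin n, Sym X (a i)) ≃
      {F : Fin n → (X →₀ ℕ) // ∀ i, ((F i).sum fun _ m => m) = a i} :=
    (Equiv.piCongrRight fun i => e1 (a i)).trans (Equiv.subtypePiEquivPi).symm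
  refine ⟨e2.trans ?_⟩
  refine ⟨fun F => ⟨∑ i : Fin n,
      (F.1 i).mapRange (fun m => Finsupp.single ((i : ℕ) + 1) m) (by simp), ?_⟩,
    fun g => ⟨fun i => g.1.mapRange (fun p => p ((i : ℕ) + 1)) rfl, ?_⟩, ?_, ?_⟩
  · -- forward property
    rw [← Finsupp.sum_finset_sum_index (fun _ => rfl) (fun _ _ _ => rfl)]
    refine Finset.sum_congr rfl fun i _ => ?_
    rw [Finsupp.sum_mapRange_index (by intro; rfl)]
    calc ((F.1 i).sum fun _ m => Finsupp.single ((i : ℕ) + 1) m)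
        = Finsupp.single ((i : ℕ) + 1) ((F.1 i).sum fun _ m => m) := by
          rw [Finsupp.sum, Finsupp.sum, Finsupp.single_finset_sum]
      _ = Finsupp.single ((i : ℕ) + 1) (a i) := by rw [F.2 i]
  · -- inverse property
    intro i
    rw [Finsupp.sum_mapRange_index (by intro; rfl)]
    have : (g.1.sum fun _ p => p ((i : ℕ) + 1)) = (g.1.sum fun _ p => p) ((i : ℕ) + 1) := by
      rw [Finsupp.sum, Finsupp.sum, Finsupp.finset_sum_apply]
    rw [this, g.2, Finsupp.finset_sum_apply]
    rw [Finset.sum_eq_single i (fun j _ hj => ?_) (by simp)]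
    · simp
    · rw [Finsupp.single_apply, if_neg]
      simpa [Fin.ext_iff] using hj
  · -- left inverse
    intro F
    ext i x
    simp only [Finsupp.mapRange_apply, Finsupp.finset_sum_apply]
    rw [Finset.sum_eq_single i (fun j _ hj => ?_) (by simp)]
    · simp
    · exact Finsupp.single_eq_of_ne' (by simpa [Fin.ext_iff] using hj)
  · -- right inverse
    rintro ⟨g, hg⟩
    have hsupp : ∀ (x : X) (k : ℕ), (∀ j : Fin n, (j : ℕ) + 1 ≠ k) → g x k = 0 := by
      intro x k hk
      have halpha : (∑ i : Fin n, Finsupp.single ((i : ℕ) + 1) (a i)) k = 0 := by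
        rw [Finsupp.finset_sum_apply]
        exact Finset.sum_eq_zero fun j _ => Finsupp.single_eq_of_ne' (hk j)
      have hsum : ∑ x ∈ g.support, g x k = 0 := by
        have := congrArg (fun p => p k) hg
        simpa [Finsupp.sum, Finsupp.finset_sum_apply, halpha] using this
      by_cases hx : x ∈ g.support
      · exact (Finset.sum_eq_zero_iff.mp hsum) x hx
      · simp [Finsupp.notMem_support_iff.mp hx]
    ext x k
    simp only [Finsupp.finset_sum_apply, Finsupp.mapRange_apply]
    by_cases h : ∃ j : Fin n, (j : ℕ) + 1 = k
    · obtain ⟨j₀, hj₀⟩ := h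
      subst hj₀
      rw [Finset.sum_eq_single j₀ (fun j _ hj => ?_) (by simp)]
      · simp
      · rw [Finsupp.single_apply, if_neg]
        simpa [Fin.ext_iff] using hj
    · push_neg at h
      rw [hsupp x k h, Finset.sum_eq_zero]
      intro j _
      exact Finsupp.single_eq_of_ne' (h j)
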